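/- Let B ⊆ S^k be a vector subspace of the space of real symmetric k×k matrices, and let B^⊥ be its orthogonal complement with respect to the trace inner product ⟨A,B⟩ = Tr(AB). Then exactly one of the following three alternatives holds: (1) there exists B ∈ B with B ≻ 0, and there is no nonzero A ∈ B^⊥ with A ⪰ 0; (2) there exists A ∈ B^⊥ with A ≻ 0, and there is no nonzero B ∈ B with B ⪰ 0; (3) there exist nonzero B ∈ B and nonzero A ∈ B^⊥ with A ⪰ 0 and B ⪰ 0, but there exists no B ∈ B with B ≻ 0 and no A ∈ B^⊥ with A ≻ 0. -/

import Mathlib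

open scoped BigOperators
open Matrix
open scoped InnerProductSpace

/-- The `2g` free letters: `Sum.inl i` is `xᵢ`, `Sum.inr i` is `xᵢ*`. -/
abbrev Lttr (g : ℕ) := Fin g ⊕ Fin g

/-- The free real algebra `ℝ⟨x,x*⟩` on `2g` letters. -/
abbrev FreePoly (g : ℕ) := FreeAlgebra ℝ (Lttr g)

noncomputable def xvar {g : ℕ} (i : Fin g) : FreePoly g := FreeAlgebra.ι ℝ (Sum.inl i)

noncomputable def xstar {g : ℕ} (i : Fin g) : FreePoly g := FreeAlgebra.ι ℝ (Sum.inr i)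

/-- The involution `*` on `ℝ⟨x,x*⟩`: linear, reverses products, swaps `xᵢ` and `xᵢ*`. -/
noncomputable def pstar {g : ℕ} (p : FreePoly g) : FreePoly g :=
  MulOpposite.unop
    (FreeAlgebra.lift ℝ
      (fun l : Lttr g => MulOpposite.op (FreeAlgebra.ι ℝ (Sum.swap l))) p)

/-- Evaluation of a noncommutative polynomial at a `g`-tuple of real `n × n` matrices,
sending `xᵢ` to `X i` and `xᵢ*` to `(X i)ᵀ`. -/
noncomputable def evalP {g n : ℕ} (X : Fin g → Matrix (Fin n) (Fin n) ℝ) :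
    FreePoly g →ₐ[ℝ] Matrix (Fin n) (Fin n) ℝ :=
  FreeAlgebra.lift ℝ (Sum.elim X (fun i => (X i)ᵀ))

/-- Entrywise (block) evaluation of a `ν × ℓ` matrix polynomial. -/
noncomputable def evalM {g n ν ℓ : ℕ} (X : Fin g → Matrix (Fin n) (Fin n) ℝ)
    (p : Matrix (Fin ν) (Fin ℓ) (FreePoly g)) :
    Matrix (Fin ν × Fin n) (Fin ℓ × Fin n) ℝ :=
  fun ir js => evalP X (p ir.1 js.1) ir.2 js.2

/-- Evaluation of a row vector of polynomials (an element of `ℝ^{1×ℓ}⟨x,x*⟩`). -/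
noncomputable def evalRow {g n ℓ : ℕ} (X : Fin g → Matrix (Fin n) (Fin n) ℝ)
    (p : Fin ℓ → FreePoly g) : Matrix (Fin n) (Fin ℓ × Fin n) ℝ :=
  fun r js => evalP X (p js.1) r js.2

/-- The involution on matrices of polynomials: entrywise `*` combined with transpose. -/
noncomputable def starM {g a b : ℕ} (p : Matrix (Fin a) (Fin b) (FreePoly g)) :
    Matrix (Fin b) (Fin a) (FreePoly g) :=
  fun i j => pstar (p j i)

/-- For a row vector `p ∈ ℝ^{1×ℓ}⟨x,x*⟩`, the `ℓ × ℓ` matrix `p*p`. -/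
noncomputable def sqForm {g ℓ : ℕ} (p : Fin ℓ → FreePoly g) :
    Matrix (Fin ℓ) (Fin ℓ) (FreePoly g) :=
  fun a b => pstar (p a) * p b

/-- For `q ∈ ℝ^{ν×ℓ}⟨x,x*⟩`, the `ℓ × ℓ` matrix `q*Lq`. -/
noncomputable def quadForm {g ν ℓ : ℕ} (L : Matrix (Fin ν) (Fin ν) (FreePoly g))
    (q : Matrix (Fin ν) (Fin ℓ) (FreePoly g)) : Matrix (Fin ℓ) (Fin ℓ) (FreePoly g) :=
  starM q * L * q

/-- For row vectors `r, ι ∈ ℝ^{1×ℓ}⟨x,x*⟩`, the `ℓ × ℓ` matrix `r*ι`. -/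
noncomputable def outerStar {g ℓ : ℕ} (r ι : Fin ℓ → FreePoly g) :
    Matrix (Fin ℓ) (Fin ℓ) (FreePoly g) :=
  fun a b => pstar (r a) * ι b

/-- `m ∈ ℝ^{a×1}I`: every row of the matrix polynomial `m` lies in the left module `I`. -/
def rowsInM {g a ℓ : ℕ} (I : Submodule (FreePoly g) (Fin ℓ → FreePoly g))
    (m : Matrix (Fin a) (Fin ℓ) (FreePoly g)) : Prop :=
  ∀ i, m i ∈ I

/-- Every row of the matrix polynomial `m` lies in the real subspace `C`. -/
def rowsInR {g a ℓ : ℕ} (C : Submodule ℝ (Fin ℓ → FreePoly g))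
    (m : Matrix (Fin a) (Fin ℓ) (FreePoly g)) : Prop :=
  ∀ i, m i ∈ C

/-- The set `ℝ^{ℓ×1}I + I*ℝ^{1×ℓ}` of `ℓ × ℓ` matrix polynomials. -/
def modPlusStar {g ℓ : ℕ} (I : Submodule (FreePoly g) (Fin ℓ → FreePoly g)) :
    Set (Matrix (Fin ℓ) (Fin ℓ) (FreePoly g)) :=
  { m | ∃ u v : Matrix (Fin ℓ) (Fin ℓ) (FreePoly g),
      rowsInM I u ∧ rowsInM I v ∧ m = u + starM v }

/-- `I` is an `L`-real left module. -/
def IsLReal {g ν ℓ : ℕ} (L : Matrix (Fin ν) (Fin ν) (FreePoly g))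
    (I : Submodule (FreePoly g) (Fin ℓ → FreePoly g)) : Prop :=
  ∀ (a b : ℕ) (p : Fin a → (Fin ℓ → FreePoly g))
    (q : Fin b → Matrix (Fin ν) (Fin ℓ) (FreePoly g)),
    ((∑ i, sqForm (p i)) + ∑ j, quadForm L (q j)) ∈ modPlusStar I →
    (∀ i, p i ∈ I) ∧ ∀ j, rowsInM I (L * q j)

/-- `I` is a strongly `L`-real left module. -/
def IsLRealStrong {g ν ℓ : ℕ} (L : Matrix (Fin ν) (Fin ν) (FreePoly g))
    (I : Submodule (FreePoly g) (Fin ℓ → FreePoly g)) : Prop :=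
  ∀ (a b : ℕ) (p : Fin a → (Fin ℓ → FreePoly g))
    (q : Fin b → Matrix (Fin ν) (Fin ℓ) (FreePoly g)),
    ((∑ i, sqForm (p i)) + ∑ j, quadForm L (q j)) ∈ modPlusStar I →
    (∀ i, p i ∈ I) ∧ ∀ j, rowsInM I (q j)

/-- `I` is a real left module. -/
def IsRealMod {g ℓ : ℕ} (I : Submodule (FreePoly g) (Fin ℓ → FreePoly g)) : Prop :=
  ∀ (a : ℕ) (p : Fin a → (Fin ℓ → FreePoly g)),
    (∑ i, sqForm (p i)) ∈ modPlusStar I → ∀ i, p i ∈ I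

/-- The `L`-real radical of `I`: the smallest `L`-real left module containing `I`. -/
noncomputable def Lrad {g ν ℓ : ℕ} (L : Matrix (Fin ν) (Fin ν) (FreePoly g))
    (I : Submodule (FreePoly g) (Fin ℓ → FreePoly g)) :
    Submodule (FreePoly g) (Fin ℓ → FreePoly g) :=
  sInf { J | I ≤ J ∧ IsLReal L J }

/-- The strong `L`-real radical of `I`. -/
noncomputable def LradStrong {g ν ℓ : ℕ} (L : Matrix (Fin ν) (Fin ν) (FreePoly g))
    (I : Submodule (FreePoly g) (Fin ℓ → FreePoly g)) :
    Submodule (FreePoly g) (Fin ℓ → FreePoly g) :=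
  sInf { J | I ≤ J ∧ IsLRealStrong L J }

/-- The real radical of `I`: the smallest real left module containing `I`. -/
noncomputable def realRad {g ℓ : ℕ} (I : Submodule (FreePoly g) (Fin ℓ → FreePoly g)) :
    Submodule (FreePoly g) (Fin ℓ → FreePoly g) :=
  sInf { J | I ≤ J ∧ IsRealMod J }

/-- The word `w` as a product of letters in `ℝ⟨x,x*⟩`. -/
noncomputable def fword {g : ℕ} (w : List (Lttr g)) : FreePoly g :=
  (w.map (FreeAlgebra.ι ℝ)).prod

/-- The subspace of polynomials of degree at most `d`. -/
noncomputable def degLE (g d : ℕ) : Submodule ℝ (FreePoly g) :=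
  Submodule.span ℝ { p | ∃ w : List (Lttr g), w.length ≤ d ∧ p = fword w }

/-- The monomial `eᵢ ⊗ w` in `ℝ^{1×ℓ}⟨x,x*⟩`. -/
noncomputable def monoRow {g ℓ : ℕ} (i : Fin ℓ) (w : List (Lttr g)) : Fin ℓ → FreePoly g :=
  fun j => if j = i then fword w else 0

/-- `C` is a right chip space: it is spanned by a set of monomials and is closed
under taking middle chips. -/
def IsChipSpace {g ℓ : ℕ} (C : Submodule ℝ (Fin ℓ → FreePoly g)) : Prop :=
  (∃ S : Set (Fin ℓ × List (Lttr g)),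
      C = Submodule.span ℝ ((fun m => monoRow m.1 m.2) '' S)) ∧
  ∀ (i : Fin ℓ) (w1 w2 w3 : List (Lttr g)),
    monoRow i (w1 ++ w2 ++ w3) ∈ C → monoRow i w3 ∈ C → monoRow i (w2 ++ w3) ∈ C

/-- `C` is full: it contains every right chip of each of its monomials. -/
def IsFullChip {g ℓ : ℕ} (C : Submodule ℝ (Fin ℓ → FreePoly g)) : Prop :=
  ∀ (i : Fin ℓ) (w1 w2 : List (Lttr g)), monoRow i (w1 ++ w2) ∈ C → monoRow i w2 ∈ C

/-- The subspace `ℝ⟨x,x*⟩_d C`: the span of all products `q • c` with `deg q ≤ d`, `c ∈ C`. -/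
noncomputable def degC {g ℓ : ℕ} (d : ℕ) (C : Submodule ℝ (Fin ℓ → FreePoly g)) :
    Submodule ℝ (Fin ℓ → FreePoly g) :=
  Submodule.span ℝ { v | ∃ q ∈ degLE g d, ∃ c ∈ C, v = fun j => q * c j }

/-- The subspace `C*ℝ⟨x,x*⟩₁C` of `ℓ × ℓ` matrix polynomials. -/
noncomputable def sandC {g ℓ : ℕ} (C : Submodule ℝ (Fin ℓ → FreePoly g)) :
    Submodule ℝ (Matrix (Fin ℓ) (Fin ℓ) (FreePoly g)) :=
  Submodule.span ℝ
    { m | ∃ a ∈ C, ∃ b ∈ C, ∃ q ∈ degLE g 1,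
        m = fun u v => pstar (a u) * q * b v }

/-- `I` is an `(L,C)`-real left module. -/
def IsLCReal {g ν ℓ : ℕ} (L : Matrix (Fin ν) (Fin ν) (FreePoly g))
    (C : Submodule ℝ (Fin ℓ → FreePoly g))
    (I : Submodule (FreePoly g) (Fin ℓ → FreePoly g)) : Prop :=
  ∀ (a b : ℕ) (p : Fin a → (Fin ℓ → FreePoly g))
    (q : Fin b → Matrix (Fin ν) (Fin ℓ) (FreePoly g)),
    (∀ i, p i ∈ C) → (∀ j, rowsInR C (q j)) →
    ((∑ i, sqForm (p i)) + ∑ j, quadForm L (q j)) ∈ modPlusStar I →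
    (∀ i, p i ∈ I) ∧ ∀ j, rowsInM I (L * q j)

/-- `I` is a strongly `(L,C)`-real left module. -/
def IsLCRealStrong {g ν ℓ : ℕ} (L : Matrix (Fin ν) (Fin ν) (FreePoly g))
    (C : Submodule ℝ (Fin ℓ → FreePoly g))
    (I : Submodule (FreePoly g) (Fin ℓ → FreePoly g)) : Prop :=
  ∀ (a b : ℕ) (p : Fin a → (Fin ℓ → FreePoly g))
    (q : Fin b → Matrix (Fin ν) (Fin ℓ) (FreePoly g)),
    (∀ i, p i ∈ C) → (∀ j, rowsInR C (q j)) →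
    ((∑ i, sqForm (p i)) + ∑ j, quadForm L (q j)) ∈ modPlusStar I →
    (∀ i, p i ∈ I) ∧ ∀ j, rowsInM I (q j)

/-- The `(L,C)`-real radical of `I`. -/
noncomputable def LCrad {g ν ℓ : ℕ} (L : Matrix (Fin ν) (Fin ν) (FreePoly g))
    (C : Submodule ℝ (Fin ℓ → FreePoly g))
    (I : Submodule (FreePoly g) (Fin ℓ → FreePoly g)) :
    Submodule (FreePoly g) (Fin ℓ → FreePoly g) :=
  sInf { J | I ≤ J ∧ IsLCReal L C J }

/-- The strong `(L,C)`-real radical of `I`. -/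
noncomputable def LCradStrong {g ν ℓ : ℕ} (L : Matrix (Fin ν) (Fin ν) (FreePoly g))
    (C : Submodule ℝ (Fin ℓ → FreePoly g))
    (I : Submodule (FreePoly g) (Fin ℓ → FreePoly g)) :
    Submodule (FreePoly g) (Fin ℓ → FreePoly g) :=
  sInf { J | I ≤ J ∧ IsLCRealStrong L C J }

/-- The constant term of a noncommutative polynomial. -/
noncomputable def constTerm (g : ℕ) : FreePoly g →ₐ[ℝ] ℝ :=
  FreeAlgebra.lift ℝ (fun _ : Lttr g => (0 : ℝ))

/-- `L` is a linear pencil: symmetric, with entries of degree at most `1`. -/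
def IsPencil {g ν : ℕ} (L : Matrix (Fin ν) (Fin ν) (FreePoly g)) : Prop :=
  starM L = L ∧ ∀ i j, L i j ∈ degLE g 1

/-- `L` is monic: its constant term is the identity matrix. -/
def IsMonic {g ν : ℕ} (L : Matrix (Fin ν) (Fin ν) (FreePoly g)) : Prop :=
  ∀ i j, constTerm g (L i j) = if i = j then 1 else 0

/-- A real matrix viewed as a constant matrix polynomial. -/
noncomputable def constM {g a b : ℕ} (A : Matrix (Fin a) (Fin b) ℝ) :
    Matrix (Fin a) (Fin b) (FreePoly g) :=
  A.map (algebraMap ℝ (FreePoly g))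

/-- `(X, v) ∈ V(I)`: every element of `I` kills `v` at `X`. -/
def inV {g ℓ n : ℕ} (I : Submodule (FreePoly g) (Fin ℓ → FreePoly g))
    (X : Fin g → Matrix (Fin n) (Fin n) ℝ) (v : Fin ℓ × Fin n → ℝ) : Prop :=
  ∀ p ∈ I, (evalRow X p).mulVec v = 0

/-- The orthogonal complement of `B` inside the symmetric matrices, with respect to
the trace inner product. -/
def symPerp {k : ℕ} (B : Submodule ℝ (Matrix (Fin k) (Fin k) ℝ)) :
    Set (Matrix (Fin k) (Fin k) ℝ) :=
  { A | A.IsSymm ∧ ∀ M ∈ B, (A * M).trace = 0 }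

noncomputable section BohnenblustHelpers

variable {k : ℕ}

local notation "Mk" => Matrix (Fin k) (Fin k) ℝ
local notation "Fk" => EuclideanSpace ℝ (Fin k × Fin k)

/-- The linear map sending a matrix to the corresponding Euclidean vector. -/
def toE (k : ℕ) : Matrix (Fin k) (Fin k) ℝ →ₗ[ℝ] EuclideanSpace ℝ (Fin k × Fin k) where
  toFun M := (WithLp.equiv 2 _).symm fun p => M p.1 p.2
  map_add' _ _ := rfl
  map_smul' _ _ := rfl

@[simp] lemma toE_apply (M : Mk) (p : Fin k × Fin k) : toE k M p = M p.1 p.2 := rfl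

lemma toE_injective : Function.Injective (toE k) := by
  intro M N h
  ext i j
  exact congrFun congr(((WithLp.equiv 2 _) : Fk → (Fin k × Fin k → ℝ)) $h) (i, j)

lemma inner_eqF (y z : Fk) : ⟪y, z⟫_ℝ = ∑ p, y p * z p := by
  simp [PiLp.inner_apply, RCLike.inner_apply]
  exact Finset.sum_congr rfl fun _ _ => mul_comm _ _

/-- The quadratic form associated to a Euclidean vector viewed as a matrix. -/
def qform (y : Fk) (x : Fin k → ℝ) : ℝ := ∑ p : Fin k × Fin k, y p * x p.1 * x p.2

lemma qform_toE (M : Mk) (x : Fin k → ℝ) : qform (toE k M) x = x ⬝ᵥ M *ᵥ x := by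
  simp only [qform, toE_apply, dotProduct, Matrix.mulVec, Fintype.sum_prod_type]
  simp [dotProduct, Finset.mul_sum]
  exact Finset.sum_congr rfl fun i _ => Finset.sum_congr rfl fun j _ => by ring

lemma qform_smul_arg (y : Fk) (x : Fin k → ℝ) (c : ℝ) :
    qform y (fun i => c * x i) = c ^ 2 * qform y x := by
  simp only [qform, Finset.mul_sum]
  exact Finset.sum_congr rfl fun p _ => by ring

lemma qform_sub (y z : Fk) (x : Fin k → ℝ) :
    qform (y - z) x = qform y x - qform z x := by
  simp only [qform, ← Finset.sum_sub_distrib]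
  refine Finset.sum_congr rfl fun p _ => ?_
  have : (y - z) p = y p - z p := rfl
  rw [this]; ring

lemma qform_add (y z : Fk) (x : Fin k → ℝ) :
    qform (y + z) x = qform y x + qform z x := by
  simp only [qform, ← Finset.sum_add_distrib]
  refine Finset.sum_congr rfl fun p _ => ?_
  have : (y + z) p = y p + z p := rfl
  rw [this]; ring

lemma qform_smul (c : ℝ) (y : Fk) (x : Fin k → ℝ) :
    qform (c • y) x = c * qform y x := by
  simp only [qform, Finset.mul_sum]
  refine Finset.sum_congr rfl fun p _ => ?_
  have : (c • y) p = c * y p := rfl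
  rw [this]; ring

lemma qform_eq_inner (y : Fk) (u : Fin k → ℝ) :
    qform y u = ⟪y, (WithLp.equiv 2 _).symm (fun p : Fin k × Fin k => u p.1 * u p.2)⟫_ℝ := by
  rw [inner_eqF]
  exact Finset.sum_congr rfl fun p _ => by
    have : ((WithLp.equiv 2 _).symm (fun p : Fin k × Fin k => u p.1 * u p.2) : Fk) p
        = u p.1 * u p.2 := rfl
    rw [this]; ring

/-- The set of (not necessarily symmetric) matrices with positive definite quadratic form,
viewed inside Euclidean space. -/
def posSet (k : ℕ) : Set (EuclideanSpace ℝ (Fin k × Fin k)) :=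
  { y | ∀ x : Fin k → ℝ, x ≠ 0 → 0 < qform y x }

lemma convex_posSet : Convex ℝ (posSet k) := by
  intro y hy z hz a b ha hb hab
  intro x hx
  rw [qform_add, qform_smul, qform_smul]
  have h1 := hy x hx
  have h2 := hz x hx
  rcases eq_or_lt_of_le ha with h | h
  · have hb1 : b = 1 := by linarith
    rw [← h, hb1]; simpa using h2
  · nlinarith [mul_pos h h1, mul_nonneg hb h2.le]


lemma norm_uu {u : EuclideanSpace ℝ (Fin k)} (hu : ‖u‖ = 1) :
    ‖((WithLp.equiv 2 _).symm (fun p : Fin k × Fin k => u p.1 * u p.2) : Fk)‖ = 1 := by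
  have hsum : ∑ i, u i ^ 2 = 1 := by
    have := EuclideanSpace.norm_eq u
    rw [hu] at this
    have h2 : Real.sqrt (∑ i, ‖u i‖ ^ 2) = 1 := this.symm
    have := Real.sqrt_eq_one.mp h2
    simpa [Real.norm_eq_abs, sq_abs] using this
  rw [EuclideanSpace.norm_eq]
  have : ∑ p : Fin k × Fin k,
      ‖((WithLp.equiv 2 _).symm (fun p : Fin k × Fin k => u p.1 * u p.2) : Fk) p‖ ^ 2 = 1 := by
    have happ : ∀ p : Fin k × Fin k,
        ((WithLp.equiv 2 _).symm (fun p : Fin k × Fin k => u p.1 * u p.2) : Fk) p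
          = u p.1 * u p.2 := fun p => rfl
    calc ∑ p : Fin k × Fin k, ‖((WithLp.equiv 2 _).symm
            (fun p : Fin k × Fin k => u p.1 * u p.2) : Fk) p‖ ^ 2
        = ∑ i, ∑ j, (u i ^ 2) * (u j ^ 2) := by
          rw [Fintype.sum_prod_type]
          exact Finset.sum_congr rfl fun i _ => Finset.sum_congr rfl fun j _ => by
            rw [happ]; simp [Real.norm_eq_abs, abs_mul, mul_pow, sq_abs]
      _ = (∑ i, u i ^ 2) * (∑ j, u j ^ 2) := by rw [← Finset.sum_mul_sum]
      _ = 1 := by rw [hsum]; ring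
  rw [this, Real.sqrt_one]

lemma continuous_qform (y : Fk) : Continuous fun x : EuclideanSpace ℝ (Fin k) => qform y x := by
  unfold qform
  refine continuous_finset_sum _ fun p _ => ?_
  have h1 : Continuous fun x : EuclideanSpace ℝ (Fin k) => x p.1 :=
    (EuclideanSpace.proj p.1).continuous
  have h2 : Continuous fun x : EuclideanSpace ℝ (Fin k) => x p.2 :=
    (EuclideanSpace.proj p.2).continuous
  exact (continuous_const.mul h1).mul h2

lemma isOpen_posSet (hk : 0 < k) : IsOpen (posSet k) := by
  rw [Metric.isOpen_iff]
  intro y hy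
  -- minimum of the quadratic form on the unit sphere
  have hsne : (Metric.sphere (0 : EuclideanSpace ℝ (Fin k)) 1).Nonempty := by
    refine ⟨EuclideanSpace.single ⟨0, hk⟩ (1 : ℝ), ?_⟩
    simp [EuclideanSpace.norm_single]
  obtain ⟨x₀, hx₀s, hmin⟩ := (isCompact_sphere (0 : EuclideanSpace ℝ (Fin k)) 1).exists_isMinOn
    hsne (continuous_qform y).continuousOn
  set c := qform y x₀ with hc
  have hx₀ : (x₀ : Fin k → ℝ) ≠ 0 := by
    intro h
    have : ‖x₀‖ = 1 := mem_sphere_zero_iff_norm.mp hx₀s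
    rw [show x₀ = 0 from by ext i; simp [h]] at this
    simp at this
  have hcpos : 0 < c := hy _ hx₀
  refine ⟨c, hcpos, ?_⟩
  intro y' hy'
  have hdist : ‖y' - y‖ < c := by
    rw [Metric.mem_ball, dist_eq_norm] at hy'; exact hy'
  intro x hx
  -- normalize x
  set X : EuclideanSpace ℝ (Fin k) := (WithLp.equiv 2 _).symm x with hX
  have hXx : ∀ i, X i = x i := fun i => rfl
  have hXne : X ≠ 0 := by
    intro h
    apply hx
    funext i
    have := congrFun (congrArg (WithLp.equiv 2 (Fin k → ℝ)) h) i
    simpa [hXx] using this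
  have hn : 0 < ‖X‖ := norm_pos_iff.mpr hXne
  set u : EuclideanSpace ℝ (Fin k) := ‖X‖⁻¹ • X with hu
  have hunorm : ‖u‖ = 1 := by
    rw [hu, norm_smul, norm_inv, norm_norm, inv_mul_cancel₀ hn.ne']
  have huapp : ∀ i, (u : Fin k → ℝ) i = ‖X‖⁻¹ * x i := fun i => rfl
  have hxu : x = fun i => ‖X‖ * (u : Fin k → ℝ) i := by
    funext i
    rw [huapp]
    field_simp
  -- q y' x = ‖X‖² (q y u + q (y'-y) u)
  have hdecomp : qform y' x = ‖X‖ ^ 2 * (qform y u + qform (y' - y) u) := by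
    rw [hxu, qform_smul_arg]
    congr 1
    rw [qform_sub]
    ring
  have hymin : c ≤ qform y u := hmin (mem_sphere_zero_iff_norm.mpr hunorm)
  have hbound : |qform (y' - y) u| ≤ ‖y' - y‖ := by
    rw [qform_eq_inner]
    calc |⟪y' - y, (WithLp.equiv 2 _).symm (fun p : Fin k × Fin k => u p.1 * u p.2)⟫_ℝ|
        ≤ ‖y' - y‖ * ‖((WithLp.equiv 2 _).symm
            (fun p : Fin k × Fin k => u p.1 * u p.2) : Fk)‖ := abs_real_inner_le_norm _ _
      _ = ‖y' - y‖ := by rw [norm_uu hunorm, mul_one]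
  have h1 : -‖y' - y‖ ≤ qform (y' - y) u := neg_le_of_abs_le hbound
  have : 0 < qform y u + qform (y' - y) u := by linarith
  rw [hdecomp]
  positivity


def symPerp' {k : ℕ} (B : Submodule ℝ (Matrix (Fin k) (Fin k) ℝ)) :
    Set (Matrix (Fin k) (Fin k) ℝ) :=
  { A | A.IsSymm ∧ ∀ M ∈ B, (A * M).trace = 0 }

lemma trace_mul_expand (A M : Mk) : (A * M).trace = ∑ i, ∑ j, A i j * M j i := by
  simp [Matrix.trace, Matrix.diag, Matrix.mul_apply]

lemma isHermitian_of_isSymm {A : Mk} (h : A.IsSymm) : A.IsHermitian := by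
  rwa [Matrix.IsHermitian, Matrix.conjTranspose_eq_transpose_of_trivial]

lemma trace_mul_pos {A M : Mk} (hA : A.PosSemidef) (hA0 : A ≠ 0) (hM : M.PosDef) :
    0 < (A * M).trace := by
  obtain ⟨C, rfl⟩ : ∃ C : Mk, A = Cᴴ * C := by
    open scoped MatrixOrder in exact CStarAlgebra.nonneg_iff_eq_star_mul_self.mp hA.nonneg
  have hC : C ≠ 0 := by rintro rfl; simp at hA0
  have key : (Cᴴ * C * M).trace = ∑ i, (fun j => C i j) ⬝ᵥ M *ᵥ (fun j => C i j) := by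
    rw [Matrix.mul_assoc, Matrix.trace_mul_comm]
    simp only [Matrix.trace, Matrix.diag, Matrix.mul_apply, Matrix.conjTranspose_apply,
      dotProduct, Matrix.mulVec, star_trivial]
    refine Finset.sum_congr rfl fun i _ => ?_
    simp only [Finset.sum_mul, Finset.mul_sum]
    rw [Finset.sum_comm]
    exact Finset.sum_congr rfl fun x _ => Finset.sum_congr rfl fun l _ => by ring
  rw [key]
  obtain ⟨i₀, hi₀⟩ : ∃ i, (fun j => C i j) ≠ 0 := by
    by_contra h
    push_neg at h
    apply hC
    ext i j
    exact congrFun (h i) j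
  refine Finset.sum_pos' (fun i _ => ?_) ⟨i₀, Finset.mem_univ _, ?_⟩
  · have := hM.posSemidef.dotProduct_mulVec_nonneg (fun j => C i j)
    simpa using this
  · have := hM.dotProduct_mulVec_pos (x := fun j => C i₀ j) hi₀
    simpa using this

lemma posDef_ne_zero (hk : 0 < k) {M : Mk} (hM : M.PosDef) : M ≠ 0 := by
  intro h
  have hx : (fun _ : Fin k => (1 : ℝ)) ≠ 0 := by
    intro hf
    have := congrFun hf ⟨0, hk⟩
    simp at this
  have := hM.dotProduct_mulVec_pos hx
  rw [h] at this
  simp at this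


lemma dotProduct_self_pos' {x : Fin k → ℝ} (hx : x ≠ 0) : 0 < x ⬝ᵥ x := by
  obtain ⟨i₀, hi₀⟩ := Function.ne_iff.mp hx
  refine Finset.sum_pos' (fun i _ => mul_self_nonneg _) ⟨i₀, Finset.mem_univ _, ?_⟩
  exact mul_self_pos.mpr hi₀

lemma exists_symPerp_psd (hk : 0 < k) (B : Submodule ℝ Mk) (hB : ∀ A ∈ B, A.IsSymm)
    (hnp : ¬ ∃ M ∈ B, M.PosDef) :
    ∃ A ∈ symPerp' B, A ≠ 0 ∧ A.PosSemidef := by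
  classical
  set B' : Submodule ℝ Fk := B.map (toE k) with hB'
  have hdisj : Disjoint (posSet k) (B' : Set Fk) := by
    rw [Set.disjoint_left]
    rintro y hys ⟨M, hM, rfl⟩
    refine hnp ⟨M, hM, .of_dotProduct_mulVec_pos (isHermitian_of_isSymm (hB M hM)) fun x hx => ?_⟩
    have := hys x hx
    rw [qform_toE] at this
    simpa using this
  obtain ⟨f, u, hsu, htu⟩ := geometric_hahn_banach_open (convex_posSet) (isOpen_posSet hk)
    B'.convex hdisj
  have hfB' : ∀ b ∈ B', f b = 0 := by
    intro b hb
    by_contra h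
    have hmem : ((u - 1) / f b) • b ∈ B' := B'.smul_mem _ hb
    have := htu _ hmem
    rw [_root_.map_smul, smul_eq_mul, div_mul_cancel₀ _ h] at this
    linarith
  have hu0 : u ≤ 0 := by simpa using htu 0 (B'.zero_mem)
  set z : Fk := (InnerProductSpace.toDual ℝ Fk).symm f with hz
  have hzf : ∀ y : Fk, ⟪z, y⟫_ℝ = f y := fun y => InnerProductSpace.toDual_symm_apply
  set g : Fk := -z with hg
  have hgpos : ∀ y ∈ posSet k, 0 < ⟪g, y⟫_ℝ := by
    intro y hy
    have h1 : f y < u := hsu y hy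
    rw [hg, inner_neg_left, hzf]
    linarith
  have hgB : ∀ M ∈ B, ⟪g, toE k M⟫_ℝ = 0 := by
    intro M hM
    rw [hg, inner_neg_left, hzf, hfB' _ ⟨M, hM, rfl⟩]
    ring
  -- identity matrix is in posSet
  have hone : toE k (1 : Mk) ∈ posSet k := by
    intro x hx
    rw [qform_toE, Matrix.one_mulVec]
    exact dotProduct_self_pos' hx
  set b : ℝ := ⟪g, toE k (1 : Mk)⟫_ℝ with hbdef
  have hbpos : 0 < b := hgpos _ hone
  -- quadratic nonnegativity for the matrix of g
  have hquad : ∀ v : Fin k → ℝ, 0 ≤ ⟪g, toE k (Matrix.of fun i j => v i * v j)⟫_ℝ := by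
    intro v
    set a : ℝ := ⟪g, toE k (Matrix.of fun i j => v i * v j)⟫_ℝ with ha
    by_contra hneg
    push_neg at hneg
    set ε : ℝ := -a / (2 * b) with hε
    have hεpos : 0 < ε := by
      rw [hε]
      apply div_pos (by linarith) (by linarith)
    have hMv : toE k (Matrix.of (fun i j => v i * v j) + ε • (1 : Mk)) ∈ posSet k := by
      intro x hx
      rw [qform_toE, Matrix.add_mulVec, dotProduct_add]
      have h1 : x ⬝ᵥ (Matrix.of fun i j => v i * v j) *ᵥ x = (∑ i, v i * x i) ^ 2 := by
        simp only [dotProduct, Matrix.mulVec, Matrix.of_apply]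
        rw [sq, Finset.sum_mul_sum]
        refine Finset.sum_congr rfl fun i _ => ?_
        rw [Finset.mul_sum]
        refine Finset.sum_congr rfl fun j _ => ?_
        ring
      have h2 : x ⬝ᵥ (ε • (1 : Mk)) *ᵥ x = ε * (x ⬝ᵥ x) := by
        rw [Matrix.smul_mulVec, Matrix.one_mulVec, dotProduct_smul, smul_eq_mul]
      rw [h1, h2]
      have := dotProduct_self_pos' hx
      positivity
    have := hgpos _ hMv
    rw [map_add, _root_.map_smul, inner_add_right, inner_smul_right] at this
    rw [← ha, ← hbdef] at this
    have hcontra : a + ε * b = a / 2 := by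
      rw [hε]
      field_simp
      ring
    rw [hcontra] at this
    linarith
  -- the candidate matrix
  set G : Mk := Matrix.of fun i j => g (i, j) with hG
  have hginner : ∀ M : Mk, ⟪g, toE k M⟫_ℝ = ∑ i, ∑ j, g (i, j) * M i j := by
    intro M
    rw [inner_eqF, Fintype.sum_prod_type]
    rfl
  set A : Mk := (1 / 2 : ℝ) • (G + Gᵀ) with hA
  have hAsymm : A.IsSymm := by
    rw [hA, Matrix.IsSymm, Matrix.transpose_smul, Matrix.transpose_add,
      Matrix.transpose_transpose, add_comm]
  have hAquad : ∀ v : Fin k → ℝ, v ⬝ᵥ A *ᵥ v = ⟪g, toE k (Matrix.of fun i j => v i * v j)⟫_ℝ := by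
    intro v
    rw [hginner]
    have expand : v ⬝ᵥ A *ᵥ v = ∑ i, ∑ j, A i j * v i * v j := by
      simp only [dotProduct, Matrix.mulVec, Finset.mul_sum]
      refine Finset.sum_congr rfl fun i _ => ?_
      refine Finset.sum_congr rfl fun j _ => ?_
      ring
    rw [expand]
    have hAij : ∀ i j, A i j = (1 / 2 : ℝ) * (g (i, j) + g (j, i)) := by
      intro i j
      rfl
    calc ∑ i, ∑ j, A i j * v i * v j
        = ∑ i, ∑ j, ((1 / 2 : ℝ) * (g (i, j) * (v i * v j)) +
            (1 / 2 : ℝ) * (g (j, i) * (v j * v i))) := by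
          refine Finset.sum_congr rfl fun i _ => Finset.sum_congr rfl fun j _ => ?_
          rw [hAij]; ring
      _ = (1 / 2 : ℝ) * (∑ i, ∑ j, g (i, j) * (v i * v j)) +
            (1 / 2 : ℝ) * (∑ i, ∑ j, g (j, i) * (v j * v i)) := by
          simp [Finset.sum_add_distrib, Finset.mul_sum]
      _ = ∑ i, ∑ j, g (i, j) * (Matrix.of fun i j => v i * v j) i j := by
          rw [Finset.sum_comm (f := fun i j => g (j, i) * (v j * v i))]
          simp [Matrix.of_apply]
          ring
  have hApsd : A.PosSemidef := by
    refine .of_dotProduct_mulVec_nonneg (isHermitian_of_isSymm hAsymm) fun x => ?_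
    have := (hAquad x).symm ▸ hquad x
    simpa using this
  have hAne : A ≠ 0 := by
    intro h0
    have htr : A.trace = 0 := by rw [h0, Matrix.trace_zero]
    have htrb : A.trace = b := by
      rw [hbdef, hginner]
      rw [hA, Matrix.trace_smul, Matrix.trace_add, Matrix.trace_transpose]
      simp only [Matrix.trace, Matrix.diag, Matrix.one_apply]
      rw [smul_eq_mul]
      have : ∑ i, ∑ j, g (i, j) * (if i = j then (1:ℝ) else 0) = ∑ i, g (i, i) := by
        refine Finset.sum_congr rfl fun i _ => ?_
        simp [Finset.sum_ite_eq]
      rw [this]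
      have hGdiag : ∀ i, G i i = g (i, i) := fun i => rfl
      simp [hGdiag]
      ring
    rw [htr] at htrb
    linarith
  refine ⟨A, ⟨hAsymm, ?_⟩, hAne, hApsd⟩
  intro M hM
  have hMs : ∀ i j, M j i = M i j := (hB M hM).apply
  rw [trace_mul_expand]
  have hsplit : ∀ i j, A i j * M j i =
      (1 / 2 : ℝ) * (g (i, j) * M i j) + (1 / 2 : ℝ) * (g (j, i) * M j i) := by
    intro i j
    have hAij : A i j = (1 / 2 : ℝ) * (g (i, j) + g (j, i)) := by
      rfl
    rw [hAij, hMs i j]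
    ring
  calc ∑ i, ∑ j, A i j * M j i
      = (1 / 2 : ℝ) * (∑ i, ∑ j, g (i, j) * M i j) +
          (1 / 2 : ℝ) * (∑ i, ∑ j, g (j, i) * M j i) := by
        simp only [hsplit, Finset.sum_add_distrib, Finset.mul_sum]
    _ = 0 := by
        rw [Finset.sum_comm (f := fun i j => g (j, i) * M j i)]
        have h1 := hgB M hM
        rw [hginner] at h1
        rw [h1]
        ring


def symSubmodule (k : ℕ) : Submodule ℝ (Matrix (Fin k) (Fin k) ℝ) where
  carrier := { A | A.IsSymm }
  add_mem' := fun ha hb => ha.add hb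
  zero_mem' := Matrix.isSymm_zero
  smul_mem' := fun c A h => by rw [Set.mem_setOf_eq, Matrix.IsSymm, Matrix.transpose_smul, h.eq]

def perpSub (B : Submodule ℝ Mk) : Submodule ℝ (Matrix (Fin k) (Fin k) ℝ) where
  carrier := symPerp' B
  zero_mem' := ⟨Matrix.isSymm_zero, fun M _ => by simp⟩
  add_mem' := fun {x y} hx hy => ⟨hx.1.add hy.1, fun M hM => by
    rw [Matrix.add_mul, Matrix.trace_add, hx.2 M hM, hy.2 M hM, add_zero]⟩
  smul_mem' := fun c x hx => ⟨by
      have h1 : Matrix.IsSymm x := hx.1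
      rw [Matrix.IsSymm, Matrix.transpose_smul, h1.eq], fun M hM => by
    rw [Matrix.smul_mul, Matrix.trace_smul, hx.2 M hM, smul_zero]⟩

lemma inner_toE_eq_trace {A N : Mk} (hN : N.IsSymm) :
    ⟪toE k A, toE k N⟫_ℝ = (A * N).trace := by
  rw [inner_eqF, trace_mul_expand, Fintype.sum_prod_type]
  refine Finset.sum_congr rfl fun i _ => Finset.sum_congr rfl fun j _ => ?_
  rw [toE_apply, toE_apply, hN.apply]

lemma mem_of_perp_symPerp (B : Submodule ℝ Mk) (hB : ∀ A ∈ B, A.IsSymm) {M : Mk}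
    (hM : M.IsSymm) (h : ∀ A ∈ symPerp' B, (A * M).trace = 0) : M ∈ B := by
  classical
  set S : Submodule ℝ Fk := (symSubmodule k).map (toE k) with hS
  set B' : Submodule ℝ Fk := B.map (toE k) with hB'
  have hBS : B' ≤ S := Submodule.map_mono (fun A hA => hB A hA)
  have hMS : toE k M ∈ S := ⟨M, hM, rfl⟩
  have hMperp : toE k M ∈ (S ⊓ B'ᗮ)ᗮ := by
    rw [Submodule.mem_orthogonal]
    rintro y ⟨⟨A, hAsym, rfl⟩, hyperp⟩
    have hAperp : A ∈ symPerp' B := by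
      refine ⟨hAsym, fun N hN => ?_⟩
      have h0 : ⟪toE k N, toE k A⟫_ℝ = 0 :=
        (Submodule.mem_orthogonal B' (toE k A)).mp hyperp (toE k N) ⟨N, hN, rfl⟩
      rw [real_inner_comm, inner_toE_eq_trace (hB N hN)] at h0
      exact h0
    rw [inner_toE_eq_trace hM]
    exact h A hAperp
  have e1 : (S ⊓ B'ᗮ)ᗮ = Sᗮ ⊔ B' := by
    have : S ⊓ B'ᗮ = (Sᗮ ⊔ B')ᗮ := by
      rw [← Submodule.inf_orthogonal, Submodule.orthogonal_orthogonal]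
    rw [this, Submodule.orthogonal_orthogonal]
  rw [e1] at hMperp
  obtain ⟨p, hp, bb, hbb, hsum⟩ := Submodule.mem_sup.mp hMperp
  have hpS : p ∈ S := by
    have : p = toE k M - bb := by rw [← hsum]; exact (add_sub_cancel_right p bb).symm
    rw [this]
    exact S.sub_mem hMS (hBS hbb)
  have hp0 : p = 0 := by
    have : p ∈ S ⊓ Sᗮ := Submodule.mem_inf.mpr ⟨hpS, hp⟩
    rwa [Submodule.inf_orthogonal_eq_bot, Submodule.mem_bot] at this
  have : toE k M = bb := by rw [← hsum, hp0, zero_add]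
  obtain ⟨N, hN, hNe⟩ := hbb
  have : M = N := toE_injective (by rw [this, hNe])
  rwa [this]

lemma exists_B_psd (hk : 0 < k) (B : Submodule ℝ Mk) (hB : ∀ A ∈ B, A.IsSymm)
    (hnp : ¬ ∃ A ∈ symPerp' B, A.PosDef) :
    ∃ M ∈ B, M ≠ 0 ∧ M.PosSemidef := by
  obtain ⟨A', hA'mem, hA'ne, hA'psd⟩ :=
    exists_symPerp_psd hk (perpSub B) (fun A hA => hA.1) hnp
  refine ⟨A', ?_, hA'ne, hA'psd⟩
  refine mem_of_perp_symPerp B hB hA'mem.1 fun A hA => ?_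
  rw [Matrix.trace_mul_comm]
  exact hA'mem.2 A hA

end BohnenblustHelpers

lemma symPerp'_eq {k : ℕ} (B : Submodule ℝ (Matrix (Fin k) (Fin k) ℝ)) :
    symPerp' B = symPerp B := rfl

lemma no_psd_perp {k : ℕ} {B : Submodule ℝ (Matrix (Fin k) (Fin k) ℝ)}
    (h : ∃ M ∈ B, M.PosDef) : ¬∃ A ∈ symPerp' B, A ≠ 0 ∧ A.PosSemidef := by
  rintro ⟨A, hA, hAne, hApsd⟩
  obtain ⟨M, hMB, hMpd⟩ := h
  have := trace_mul_pos hApsd hAne hMpd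
  rw [hA.2 M hMB] at this
  exact lt_irrefl 0 this

lemma no_psd_B {k : ℕ} {B : Submodule ℝ (Matrix (Fin k) (Fin k) ℝ)}
    (h : ∃ A ∈ symPerp' B, A.PosDef) : ¬∃ M ∈ B, M ≠ 0 ∧ M.PosSemidef := by
  rintro ⟨M, hMB, hMne, hMpsd⟩
  obtain ⟨A, hAperp, hApd⟩ := h
  have h1 := trace_mul_pos hMpsd hMne hApd
  rw [Matrix.trace_mul_comm, hAperp.2 M hMB] at h1
  exact lt_irrefl 0 h1

/-- **Bohnenblust dichotomy for subspaces of symmetric matrices.** -/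
theorem bohnenblust_trichotomy (k : ℕ) (hk : 0 < k)
    (B : Submodule ℝ (Matrix (Fin k) (Fin k) ℝ)) (hB : ∀ A ∈ B, A.IsSymm) :
    (((∃ M ∈ B, M.PosDef) ∧ ¬∃ A ∈ symPerp B, A ≠ 0 ∧ A.PosSemidef) ∧
      ¬((∃ A ∈ symPerp B, A.PosDef) ∧ ¬∃ M ∈ B, M ≠ 0 ∧ M.PosSemidef) ∧
      ¬((∃ M ∈ B, M ≠ 0 ∧ M.PosSemidef) ∧ (∃ A ∈ symPerp B, A ≠ 0 ∧ A.PosSemidef) ∧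
        (¬∃ M ∈ B, M.PosDef) ∧ ¬∃ A ∈ symPerp B, A.PosDef)) ∨
    ((¬((∃ M ∈ B, M.PosDef) ∧ ¬∃ A ∈ symPerp B, A ≠ 0 ∧ A.PosSemidef)) ∧
      ((∃ A ∈ symPerp B, A.PosDef) ∧ ¬∃ M ∈ B, M ≠ 0 ∧ M.PosSemidef) ∧
      ¬((∃ M ∈ B, M ≠ 0 ∧ M.PosSemidef) ∧ (∃ A ∈ symPerp B, A ≠ 0 ∧ A.PosSemidef) ∧
        (¬∃ M ∈ B, M.PosDef) ∧ ¬∃ A ∈ symPerp B, A.PosDef)) ∨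
    ((¬((∃ M ∈ B, M.PosDef) ∧ ¬∃ A ∈ symPerp B, A ≠ 0 ∧ A.PosSemidef)) ∧
      (¬((∃ A ∈ symPerp B, A.PosDef) ∧ ¬∃ M ∈ B, M ≠ 0 ∧ M.PosSemidef)) ∧
      ((∃ M ∈ B, M ≠ 0 ∧ M.PosSemidef) ∧ (∃ A ∈ symPerp B, A ≠ 0 ∧ A.PosSemidef) ∧
        (¬∃ M ∈ B, M.PosDef) ∧ ¬∃ A ∈ symPerp B, A.PosDef)) := by
  classical
  by_cases hpB : ∃ M ∈ B, M.PosDef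
  · left
    refine ⟨⟨hpB, no_psd_perp hpB⟩, ?_, ?_⟩
    · rintro ⟨hpA, hnsB⟩
      obtain ⟨M, hMB, hMpd⟩ := hpB
      exact hnsB ⟨M, hMB, posDef_ne_zero hk hMpd, hMpd.posSemidef⟩
    · rintro ⟨_, _, hnpB, _⟩
      exact hnpB hpB
  · by_cases hpA : ∃ A ∈ symPerp B, A.PosDef
    · right; left
      refine ⟨fun h => hpB h.1, ⟨hpA, no_psd_B hpA⟩, ?_⟩
      rintro ⟨_, _, _, h4⟩
      exact h4 hpA
    · right; right
      exact ⟨fun h => hpB h.1, fun h => hpA h.1,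
        exists_B_psd hk B hB hpA, exists_symPerp_psd hk B hB hpB, hpB, hpA⟩
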